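/- arXiv:1301.3115 — 2 statements merged into one kernel-verified Lean document; each statement's English description precedes it below -/
import Mathlib

section
/- Let a group G₀ act on a set M, let H₀ and K₀ be subgroups of G₀, and let z ∈ M. Then the intersection of the H₀-orbit of z with the K₀-orbit of z is a union of at most |Stab_{G₀}(z) ∩ H₀K₀| orbits under the action of H₀ ∩ K₀. More precisely, if u₁, ..., uₙ are elements of Orb_{H₀}(z) ∩ Orb_{K₀}(z) lying in pairwise distinct (H₀ ∩ K₀)-orbits, then n ≤ |Stab_{G₀}(z) ∩ H₀K₀| (where H₀K₀ denotes the set of products hk with h ∈ H₀, k ∈ K₀). -/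
/-- If a group `G₀` acts on a set `M`, `H₀, K₀ ≤ G₀` and `z ∈ M`, then
`Orb_{H₀}(z) ∩ Orb_{K₀}(z)` is a union of at most `|Stab_{G₀}(z) ∩ H₀K₀|`
orbits under `H₀ ∩ K₀`: any elements `u 0, ..., u (n-1)` of the intersection of
the orbits lying in pairwise distinct `(H₀ ∩ K₀)`-orbits satisfy
`n ≤ |Stab_{G₀}(z) ∩ H₀K₀|`. -/
theorem stmt0 {G₀ M : Type*} [Group G₀] [MulAction G₀ M]
    (H₀ K₀ : Subgroup G₀) (z : M)
    (hfin : {g : G₀ | g • z = z ∧ ∃ h ∈ H₀, ∃ k ∈ K₀, g = h * k}.Finite)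
    (n : ℕ) (u : Fin n → M)
    (hu : ∀ i, (∃ h ∈ H₀, h • z = u i) ∧ (∃ k ∈ K₀, k • z = u i))
    (hdist : ∀ i j, i ≠ j → ∀ c ∈ H₀ ⊓ K₀, c • u i ≠ u j) :
    n ≤ Nat.card {g : G₀ | g • z = z ∧ ∃ h ∈ H₀, ∃ k ∈ K₀, g = h * k} := by
  classical
  set S := {g : G₀ | g • z = z ∧ ∃ h ∈ H₀, ∃ k ∈ K₀, g = h * k} with hS
  haveI : Finite S := hfin
  choose h hH hhz using fun i => (hu i).1
  choose k hK hkz using fun i => (hu i).2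
  have hmem : ∀ i, (h i)⁻¹ * k i ∈ S := by
    intro i
    refine ⟨?_, (h i)⁻¹, H₀.inv_mem (hH i), k i, hK i, rfl⟩
    rw [mul_smul, hkz i, ← hhz i, inv_smul_smul]
  set f : Fin n → S := fun i => ⟨(h i)⁻¹ * k i, hmem i⟩ with hf
  have hinj : Function.Injective f := by
    intro i j hij
    by_contra hne
    have heq : (h i)⁻¹ * k i = (h j)⁻¹ * k j := Subtype.ext_iff.mp hij
    have hc : h j * (h i)⁻¹ = k j * (k i)⁻¹ := by
      have := congrArg (fun x => h j * x * (k i)⁻¹) heq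
      simpa [mul_assoc] using this
    refine hdist i j hne (h j * (h i)⁻¹) ⟨H₀.mul_mem (hH j) (H₀.inv_mem (hH i)),
      hc ▸ K₀.mul_mem (hK j) (K₀.inv_mem (hK i))⟩ ?_
    rw [mul_smul, ← hhz i, inv_smul_smul, hhz j]
  calc n = Nat.card (Fin n) := (Nat.card_eq_fintype_card.trans (Fintype.card_fin n)).symm
    _ ≤ Nat.card S := Nat.card_le_card_of_injective f hinj
end

section
/- For any two integers a ≥ 2 and b ≥ 2 with a ≤ b, and any positive integer m, and any nonnegative integers d₁, ..., d_s satisfying d_i ≤ a for all i and Σ d_i ≤ m·a·b, the inequality Σ_{i=1}^{s} (d_i − 2) ≤ 3m·(a−2)·(b−2) holds provided that additionally either s ≤ m·b or s ≥ m·b (i.e. unconditionally). -/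
/-- For integers `a, b ≥ 2` with `a ≤ b`, a positive integer `m`, and
nonnegative integers `d₁, ..., d_s` with `d i ≤ a` and `∑ d i ≤ m·a·b`, one has
`∑ (d i − 2) ≤ 3m·(a−2)·(b−2)`. -/
theorem stmt3 (a b m : ℤ) (ha : 2 ≤ a) (hab : a ≤ b) (hm : 1 ≤ m)
    (s : ℕ) (d : Fin s → ℤ) (hd0 : ∀ i, 0 ≤ d i) (hda : ∀ i, d i ≤ a)
    (hsum : ∑ i, d i ≤ m * a * b) :
    ∑ i, (d i - 2) ≤ 3 * m * ((a - 2) * (b - 2)) := by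
  rcases lt_or_ge a 3 with ha3 | ha3
  · have h2 : ∀ i, d i - 2 ≤ 0 := fun i => by have := hda i; omega
    have : ∑ i, (d i - 2) ≤ 0 := Finset.sum_nonpos fun i _ => h2 i
    have ha2 : a = 2 := by omega
    subst ha2
    simpa using this
  · set T := Finset.univ.filter (fun i : Fin s => 3 ≤ d i) with hT
    have hb3 : 3 ≤ b := le_trans ha3 hab
    have hsplit : ∑ i, (d i - 2) ≤ ∑ i ∈ T, (d i - 2) := by
      rw [← Finset.sum_filter_add_sum_filter_not Finset.univ (fun i => 3 ≤ d i)
        (fun i => d i - 2)]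
      have hneg : ∑ i ∈ Finset.univ.filter (fun i => ¬ 3 ≤ d i), (d i - 2) ≤ 0 :=
        Finset.sum_nonpos fun i hi => by
          simp only [Finset.mem_filter] at hi; omega
      linarith
    have hsub : ∑ i ∈ T, d i ≤ ∑ i, d i :=
      Finset.sum_le_sum_of_subset_of_nonneg (Finset.filter_subset _ _)
        (fun i _ _ => hd0 i)
    have hcard : (3:ℤ) * T.card ≤ ∑ i ∈ T, d i := by
      calc (3:ℤ) * T.card = ∑ _i ∈ T, (3:ℤ) := by
            rw [Finset.sum_const, nsmul_eq_mul, mul_comm]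
        _ ≤ ∑ i ∈ T, d i := Finset.sum_le_sum fun i hi => by
            simp only [hT, Finset.mem_filter] at hi; exact hi.2
    rcases le_or_gt (T.card : ℤ) (m * b) with hc | hc
    · have hub : ∑ i ∈ T, (d i - 2) ≤ (T.card : ℤ) * (a - 2) := by
        calc ∑ i ∈ T, (d i - 2) ≤ ∑ _i ∈ T, (a - 2) :=
              Finset.sum_le_sum fun i _ => by have := hda i; omega
          _ = (T.card : ℤ) * (a - 2) := by rw [Finset.sum_const, nsmul_eq_mul]
      have hfin : (T.card:ℤ) * (a-2) ≤ 3*m*((a-2)*(b-2)) := by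
        have h1 : (T.card:ℤ) * (a-2) ≤ m * b * (a-2) :=
          mul_le_mul_of_nonneg_right hc (by omega)
        nlinarith [mul_nonneg (mul_nonneg (by linarith : (0:ℤ) ≤ m) (by linarith : (0:ℤ) ≤ a - 2)) (by linarith : (0:ℤ) ≤ 2*b - 6)]
      linarith
    · have heq : ∑ i ∈ T, (d i - 2) = (∑ i ∈ T, d i) - 2 * T.card := by
        rw [Finset.sum_sub_distrib, Finset.sum_const, nsmul_eq_mul, mul_comm]
      have hfin : (∑ i ∈ T, d i) - 2 * (T.card : ℤ) ≤ 3*m*((a-2)*(b-2)) := by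
        nlinarith [mul_nonneg (mul_nonneg (by linarith : (0:ℤ) ≤ m) (by linarith : (0:ℤ) ≤ a - 2)) (by linarith : (0:ℤ) ≤ 2*b - 6), mul_le_mul_of_nonneg_right (le_of_lt hc) (by linarith : (0:ℤ) ≤ a - 2)]
      linarith
end
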